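/- Let U be a d-dimensional complex vector space and q_* a quadratic form on U with kernel K of dimension k. Let V_K be the subspace of quadratic forms q whose restriction to K vanishes. Then there exists a nonzero constant c such that the degree-2k homogeneous component Φ_{2k} of det(q_* + q) satisfies Φ_{2k}(q) = c·det(q_*^∨ restricted to q̃(K)) for all q ∈ V_K. -/

import Mathlib

open Matrix Polynomial

lemma symmdot {n : Type*} [Fintype n] (A : Matrix n n ℂ) (hA : A.IsSymm) (x y : n → ℂ) :
    x ⬝ᵥ A.mulVec y = y ⬝ᵥ A.mulVec x := by
  simp only [dotProduct, Matrix.mulVec, dotProduct, Finset.mul_sum]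
  rw [Finset.sum_comm]
  refine Finset.sum_congr rfl fun i _ => Finset.sum_congr rfl fun j _ => ?_
  rw [hA.apply]
  ring

lemma key_coeff (k m : ℕ) (B : Matrix (Fin k) (Fin m) ℂ) (Cm : Matrix (Fin m) (Fin k) ℂ)
    (Q₁ D : Matrix (Fin m) (Fin m) ℂ) :
    (Matrix.det (fromBlocks (0 : Matrix (Fin k) (Fin k) ℂ[X]) ((X : ℂ[X]) • B.map C) ((X : ℂ[X]) • Cm.map C) (Q₁.map C + (X : ℂ[X]) • D.map C))).coeff (2*k)
    = Matrix.det (fromBlocks (0 : Matrix (Fin k) (Fin k) ℂ) B Cm Q₁) := by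
  set N' : Matrix (Fin k ⊕ Fin m) (Fin k ⊕ Fin m) ℂ[X] :=
    fromBlocks (0 : Matrix (Fin k) (Fin k) ℂ[X]) (B.map C) (Cm.map C) (Q₁.map C + (X : ℂ[X]) • D.map C) with hN'
  set D₁ : Matrix (Fin k ⊕ Fin m) (Fin k ⊕ Fin m) ℂ[X] :=
    fromBlocks ((X : ℂ[X]) • 1) 0 0 1 with hD₁
  have hfac : fromBlocks 0 ((X : ℂ[X]) • B.map C) ((X : ℂ[X]) • Cm.map C) (Q₁.map C + (X : ℂ[X]) • D.map C)
      = D₁ * N' * D₁ := by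
    simp [hN', hD₁, fromBlocks_multiply, Matrix.smul_mul, Matrix.mul_smul]
  have hdetD₁ : D₁.det = X ^ k := by
    simp [hD₁, det_fromBlocks_zero₂₁, Matrix.det_smul]
  rw [hfac, Matrix.det_mul, Matrix.det_mul, hdetD₁]
  have : X ^ k * N'.det * X ^ k = X ^ (2 * k) * N'.det := by ring
  rw [this]
  have h2 : (X ^ (2*k) * N'.det).coeff (0 + 2*k) = N'.det.coeff 0 :=
    Polynomial.coeff_X_pow_mul _ _ _
  rw [zero_add] at h2
  rw [h2, Polynomial.coeff_zero_eq_eval_zero]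
  have := RingHom.map_det (Polynomial.evalRingHom (0:ℂ)) N'
  rw [show N'.det.eval 0 = (Polynomial.evalRingHom (0:ℂ)) N'.det from rfl, this]
  congr 1
  ext i j
  cases i <;> cases j <;> simp [hN', fromBlocks, Matrix.map_apply]

lemma dotProduct_sum' {n ι : Type*} [Fintype n] (v : n → ℂ) (s : Finset ι) (f : ι → n → ℂ) :
    v ⬝ᵥ (∑ j ∈ s, f j) = ∑ j ∈ s, v ⬝ᵥ f j := by
  simp only [dotProduct, Finset.sum_apply, Finset.mul_sum]
  exact Finset.sum_comm

lemma sum_dotProduct' {n ι : Type*} [Fintype n] (v : n → ℂ) (s : Finset ι) (f : ι → n → ℂ) :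
    (∑ j ∈ s, f j) ⬝ᵥ v = ∑ j ∈ s, f j ⬝ᵥ v := by
  simp only [dotProduct, Finset.sum_apply, Finset.sum_mul]
  exact Finset.sum_comm

lemma mulVec_sum' {n ι p : Type*} [Fintype n] [Fintype p] (A : Matrix p n ℂ) (s : Finset ι) (f : ι → n → ℂ) :
    A.mulVec (∑ j ∈ s, f j) = ∑ j ∈ s, A.mulVec (f j) := by
  funext i
  simp only [Matrix.mulVec, dotProduct, Finset.sum_apply, Finset.mul_sum]
  exact Finset.sum_comm

lemma mulVec_smul' {n p : Type*} [Fintype n] [Fintype p] (A : Matrix p n ℂ) (c : ℂ) (x : n → ℂ) :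
    A.mulVec (c • x) = c • A.mulVec x := by
  funext i
  simp [Matrix.mulVec, dotProduct, Finset.mul_sum]
  ring_nf
  exact Finset.sum_congr rfl fun j _ => by ring

theorem stmt_3 (d k : ℕ) (Q : Matrix (Fin d) (Fin d) ℂ) (hQ : Q.IsSymm)
    (K : Submodule ℂ (Fin d → ℂ)) (hK : K = LinearMap.ker Q.mulVecLin)
    (hk : Module.finrank ℂ K = k)
    (b : Module.Basis (Fin k) ℂ K)
    (Bdual : (Fin d → ℂ) → (Fin d → ℂ) → ℂ)
    (hBdual : ∀ u v : Fin d → ℂ, Bdual (Q.mulVec u) (Q.mulVec v) = u ⬝ᵥ Q.mulVec v) :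
    ∃ c : ℂ, c ≠ 0 ∧ ∀ M : Matrix (Fin d) (Fin d) ℂ, M.IsSymm →
      (∀ x ∈ K, x ⬝ᵥ M.mulVec x = 0) →
      (Matrix.det (Q.map (Polynomial.C) + (Polynomial.X : Polynomial ℂ) • M.map Polynomial.C)).coeff (2 * k)
        = c * Matrix.det (Matrix.of fun i j : Fin k =>
            Bdual (M.mulVec (b i : Fin d → ℂ)) (M.mulVec (b j : Fin d → ℂ))) := by
  classical
  have hkd : k ≤ d := by
    have h1 := K.finrank_le
    rwa [hk, Module.finrank_fin_fun] at h1
  set m := d - k with hmdef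
  have hm : k + m = d := Nat.add_sub_cancel' hkd
  set e : (Fin k ⊕ Fin m) ≃ Fin d := finSumFinEquiv.trans (finCongr hm) with hedef
  obtain ⟨W, hWc⟩ := Submodule.exists_isCompl K
  have hWrank : Module.finrank ℂ W = m := by
    have h2 := Submodule.finrank_add_eq_of_isCompl hWc
    rw [hk, Module.finrank_fin_fun] at h2
    omega
  set b' : Module.Basis (Fin m) ℂ W := Module.finBasisOfFinrankEq ℂ W hWrank with hb'def
  set 𝔅 : Module.Basis (Fin k ⊕ Fin m) ℂ (Fin d → ℂ) :=
    (b.prod b').map (Submodule.prodEquivOfIsCompl K W hWc) with h𝔅def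
  set V : (Fin k ⊕ Fin m) → (Fin d → ℂ) := fun a => 𝔅 a with hVdef
  have hVinl : ∀ i, V (Sum.inl i) = (b i : Fin d → ℂ) := by
    intro i
    simp [hVdef, h𝔅def, Module.Basis.map_apply, Submodule.coe_prodEquivOfIsCompl',
      Module.Basis.prod_apply_inl_fst, Module.Basis.prod_apply_inl_snd]
  have hVinr : ∀ j, V (Sum.inr j) = (b' j : Fin d → ℂ) := by
    intro j
    simp [hVdef, h𝔅def, Module.Basis.map_apply, Submodule.coe_prodEquivOfIsCompl',
      Module.Basis.prod_apply_inr_fst, Module.Basis.prod_apply_inr_snd]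
  set Pd : Matrix (Fin d) (Fin d) ℂ := (Pi.basisFun ℂ (Fin d)).toMatrix (𝔅.reindex e) with hPddef
  have hPdinv : Invertible Pd := (Pi.basisFun ℂ (Fin d)).invertibleToMatrix (𝔅.reindex e)
  have hPdapp : ∀ i j, Pd i j = V (e.symm j) i := by
    intro i j
    simp [hPddef, Module.Basis.toMatrix_apply, Module.Basis.reindex_apply, hVdef]
  -- nondegeneracy
  have hzero : ∀ x : Fin d → ℂ, (∀ a, V a ⬝ᵥ x = 0) → x = 0 := by
    intro x hx
    have hinj := Matrix.mulVec_injective_of_invertible Pdᵀ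
    apply hinj
    rw [Matrix.mulVec_zero]
    funext j
    have h3 : Pdᵀ.mulVec x j = V (e.symm j) ⬝ᵥ x := by
      simp [Matrix.mulVec, dotProduct, Matrix.transpose_apply, hPdapp]
    rw [h3, hx]; rfl
  have hQb : ∀ x : Fin d → ℂ, x ∈ K → Q.mulVec x = 0 := by
    intro x hx
    rw [hK, LinearMap.mem_ker] at hx
    simpa [Matrix.mulVecLin_apply] using hx
  set Q₁ : Matrix (Fin m) (Fin m) ℂ :=
    Matrix.of (fun s t => V (Sum.inr s) ⬝ᵥ Q.mulVec (V (Sum.inr t))) with hQ₁def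
  have hQ₁symm : Q₁.IsSymm := by
    ext s t
    simp only [Matrix.transpose_apply, hQ₁def, Matrix.of_apply]
    exact symmdot Q hQ (V (Sum.inr t)) (V (Sum.inr s))
  -- value facts about Q-blocks
  have hQinlL : ∀ i a, V (Sum.inl i) ⬝ᵥ Q.mulVec (V a) = 0 := by
    intro i a
    rw [symmdot Q hQ, hVinl, hQb _ (b i).2, dotProduct_zero]
  have hQinlR : ∀ a i, V a ⬝ᵥ Q.mulVec (V (Sum.inl i)) = 0 := by
    intro a i
    rw [hVinl, hQb _ (b i).2, dotProduct_zero]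
  -- invertibility of Q₁
  have hQ₁det : IsUnit Q₁.det := by
    rw [← Matrix.isUnit_iff_isUnit_det, ← Matrix.mulVec_injective_iff_isUnit]
    have hker : ∀ x, Q₁.mulVec x = 0 → x = 0 := by
      intro x hx
      set w : Fin d → ℂ := ∑ j, x j • V (Sum.inr j) with hw
      have hQw : ∀ a, V a ⬝ᵥ Q.mulVec w = 0 := by
        intro a
        have hexp : Q.mulVec w = ∑ j, x j • Q.mulVec (V (Sum.inr j)) := by
          rw [hw]
          rw [mulVec_sum']
          exact Finset.sum_congr rfl fun j _ => mulVec_smul' Q (x j) _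
        rw [hexp]
        rw [dotProduct_sum']
        cases a with
        | inl t =>
          simp only [dotProduct_smul, smul_eq_mul]
          refine Finset.sum_eq_zero fun j _ => ?_
          rw [hQinlL]; ring
        | inr s =>
          have : ∀ j, V (Sum.inr s) ⬝ᵥ (x j • Q.mulVec (V (Sum.inr j))) = x j * Q₁ s j := by
            intro j; simp [dotProduct_smul, hQ₁def, smul_eq_mul]
          rw [Finset.sum_congr rfl fun j _ => this j]
          have := congrFun hx s
          simpa [Matrix.mulVec, dotProduct, mul_comm] using this
      have hwK : w ∈ K := by
        rw [hK, LinearMap.mem_ker]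
        have : Q.mulVec w = 0 := hzero _ hQw
        simpa [Matrix.mulVecLin_apply] using this
      have hwW : w ∈ W := by
        rw [hw]
        exact Submodule.sum_mem _ fun j _ => Submodule.smul_mem _ _ (by rw [hVinr]; exact (b' j).2)
      have hw0 : w = 0 := by
        have : w ∈ K ⊓ W := ⟨hwK, hwW⟩
        rwa [hWc.inf_eq_bot, Submodule.mem_bot] at this
      -- now conclude x = 0
      have hsum : (∑ j, x j • b' j : W) = 0 := by
        apply Subtype.ext
        push_cast
        rw [← hw0, hw]
        congr 1
        funext j
        rw [hVinr]
      have hli := Fintype.linearIndependent_iff.mp b'.linearIndependent x hsum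
      funext j; exact hli j
    intro x y hxy
    have : Q₁.mulVec (x - y) = 0 := by
      rw [Matrix.mulVec_sub, hxy, sub_self]
    have := hker _ this
    exact sub_eq_zero.mp this
  have hPdet : Pd.det ≠ 0 := (Matrix.isUnit_det_of_invertible Pd).ne_zero
  refine ⟨((-1)^k * Q₁.det) / Pd.det^2, ?_, ?_⟩
  · apply div_ne_zero
    · exact mul_ne_zero (pow_ne_zero _ (by norm_num)) hQ₁det.ne_zero
    · exact pow_ne_zero _ hPdet
  intro M hMsymm hM0
  -- polarization
  have hMK : ∀ x y : Fin d → ℂ, x ∈ K → y ∈ K → x ⬝ᵥ M.mulVec y = 0 := by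
    intro x y hx hy
    have h1 := hM0 (x+y) (K.add_mem hx hy)
    have h2 := hM0 x hx
    have h3 := hM0 y hy
    have hsym := symmdot M hMsymm x y
    rw [Matrix.mulVec_add] at h1
    simp only [dotProduct_add, add_dotProduct] at h1
    linear_combination (h1 - h2 - h3 + hsym) / 2
  set B' : Matrix (Fin k) (Fin m) ℂ :=
    Matrix.of (fun i s => V (Sum.inl i) ⬝ᵥ M.mulVec (V (Sum.inr s))) with hB'def
  set C' : Matrix (Fin m) (Fin k) ℂ :=
    Matrix.of (fun s i => V (Sum.inr s) ⬝ᵥ M.mulVec (V (Sum.inl i))) with hC'def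
  set D' : Matrix (Fin m) (Fin m) ℂ :=
    Matrix.of (fun s t => V (Sum.inr s) ⬝ᵥ M.mulVec (V (Sum.inr t))) with hD'def
  have hBC : ∀ i s, B' i s = C' s i := fun i s => symmdot M hMsymm _ _
  -- entry formula for conjugation by Pd
  have hentry : ∀ (A : Matrix (Fin d) (Fin d) ℂ) (a c : Fin d),
      (Pdᵀ * A * Pd) a c = V (e.symm a) ⬝ᵥ A.mulVec (V (e.symm c)) := by
    intro A a c
    rw [Matrix.mul_assoc, Matrix.mul_apply]
    simp only [dotProduct, Matrix.transpose_apply, hPdapp, Matrix.mul_apply, Matrix.mulVec,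
      dotProduct]
  have hQPP : Pdᵀ * Q * Pd
      = (fromBlocks (0 : Matrix (Fin k) (Fin k) ℂ) 0 0 Q₁).submatrix e.symm e.symm := by
    ext a c
    rw [Matrix.submatrix_apply, hentry]
    rcases h1 : e.symm a with i | s <;> rcases h2 : e.symm c with j | t <;>
      simp [fromBlocks, hQ₁def, hQinlL, hQinlR]
  have hMPP : Pdᵀ * M * Pd
      = (fromBlocks (0 : Matrix (Fin k) (Fin k) ℂ) B' C' D').submatrix e.symm e.symm := by
    ext a c
    rw [Matrix.submatrix_apply, hentry]
    rcases h1 : e.symm a with i | s <;> rcases h2 : e.symm c with j | t <;>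
      simp [fromBlocks, hB'def, hC'def, hD'def]
    · rw [hVinl, hVinl]
      exact hMK _ _ (b i).2 (b j).2
  -- determinant identity over ℂ[X]
  have hdetstep :
      (Polynomial.C (Pd.det))^2 * Matrix.det (Q.map Polynomial.C + (X:ℂ[X]) • M.map Polynomial.C)
        = Matrix.det (fromBlocks (0 : Matrix (Fin k) (Fin k) ℂ[X]) ((X:ℂ[X]) • B'.map Polynomial.C)
            ((X:ℂ[X]) • C'.map Polynomial.C) (Q₁.map Polynomial.C + (X:ℂ[X]) • D'.map Polynomial.C)) := by
    have hmapmul : ∀ (A B : Matrix (Fin d) (Fin d) ℂ),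
        (A * B).map (Polynomial.C : ℂ →+* ℂ[X]) = A.map Polynomial.C * B.map Polynomial.C :=
      fun A B => Matrix.map_mul
    have h1 : (Pd.map (Polynomial.C : ℂ →+* ℂ[X]))ᵀ
          * (Q.map Polynomial.C + (X:ℂ[X]) • M.map Polynomial.C) * (Pd.map Polynomial.C)
        = (Pdᵀ * Q * Pd).map Polynomial.C + (X:ℂ[X]) • ((Pdᵀ * M * Pd).map Polynomial.C) := by
      rw [← Matrix.transpose_map, Matrix.mul_add, Matrix.add_mul, Matrix.mul_smul,
        Matrix.smul_mul, ← hmapmul, ← hmapmul, ← hmapmul, ← hmapmul]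
    have h2 := congrArg Matrix.det h1
    rw [Matrix.det_mul, Matrix.det_mul, Matrix.det_transpose] at h2
    have hdetmap : (Pd.map (⇑(Polynomial.C : ℂ →+* ℂ[X]))).det = Polynomial.C Pd.det := by
      rw [RingHom.map_det, RingHom.mapMatrix_apply]
    rw [hdetmap] at h2
    have h3 : ((fromBlocks (0 : Matrix (Fin k) (Fin k) ℂ) 0 0 Q₁).submatrix e.symm e.symm).map
            (Polynomial.C : ℂ → ℂ[X])
        + (X:ℂ[X]) • ((fromBlocks (0 : Matrix (Fin k) (Fin k) ℂ) B' C' D').submatrix e.symm e.symm).map Polynomial.C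
        = ((fromBlocks (0 : Matrix (Fin k) (Fin k) ℂ[X]) ((X:ℂ[X]) • B'.map Polynomial.C)
            ((X:ℂ[X]) • C'.map Polynomial.C)
            (Q₁.map Polynomial.C + (X:ℂ[X]) • D'.map Polynomial.C)).submatrix e.symm e.symm) := by
      ext a c
      rcases h4 : e.symm a with i | s <;> rcases h5 : e.symm c with j | t <;>
        simp [fromBlocks, Matrix.submatrix_apply, Matrix.map_apply, h4, h5]
    rw [hQPP, hMPP, h3, Matrix.det_submatrix_equiv_self] at h2
    calc (Polynomial.C (Pd.det))^2 * Matrix.det (Q.map Polynomial.C + (X:ℂ[X]) • M.map Polynomial.C)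
        = Polynomial.C Pd.det * Matrix.det (Q.map Polynomial.C + (X:ℂ[X]) • M.map Polynomial.C)
            * Polynomial.C Pd.det := by ring
      _ = _ := h2
  -- Schur complement
  haveI : Invertible Q₁ := Q₁.invertibleOfIsUnitDet hQ₁det
  have hschur : Matrix.det (fromBlocks (0 : Matrix (Fin k) (Fin k) ℂ) B' C' Q₁)
      = Q₁.det * ((-1)^k * (B' * Q₁⁻¹ * C').det) := by
    rw [Matrix.det_fromBlocks₂₂, Matrix.invOf_eq_nonsing_inv, zero_sub, Matrix.det_neg,
      Fintype.card_fin]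
  -- the dual-form Gram matrix
  set colC : Fin k → Fin m → ℂ := fun i s => C' s i with hcolC
  set wv : Fin k → Fin m → ℂ := fun i => Q₁⁻¹.mulVec (colC i) with hwv
  set u : Fin k → Fin d → ℂ := fun i => ∑ s, wv i s • V (Sum.inr s) with hu
  have hQ₁w : ∀ i, Q₁.mulVec (wv i) = colC i := by
    intro i
    show Q₁.mulVec (Q₁⁻¹.mulVec (colC i)) = colC i
    rw [Matrix.mulVec_mulVec, Matrix.mul_nonsing_inv _ hQ₁det, Matrix.one_mulVec]
  have hQuexp : ∀ i, Q.mulVec (u i) = ∑ s, wv i s • Q.mulVec (V (Sum.inr s)) := by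
    intro i
    show Q.mulVec (∑ s, wv i s • V (Sum.inr s)) = _
    rw [mulVec_sum']
    exact Finset.sum_congr rfl fun s _ => mulVec_smul' Q _ _
  have hVQuL : ∀ (t : Fin k) i, V (Sum.inl t) ⬝ᵥ Q.mulVec (u i) = 0 := by
    intro t i
    rw [hQuexp, dotProduct_sum']
    refine Finset.sum_eq_zero fun s _ => ?_
    rw [dotProduct_smul, hQinlL]
    simp
  have hVQuR : ∀ (s : Fin m) i, V (Sum.inr s) ⬝ᵥ Q.mulVec (u i) = colC i s := by
    intro s i
    rw [hQuexp, dotProduct_sum']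
    have h6 : ∀ t', V (Sum.inr s) ⬝ᵥ (wv i t' • Q.mulVec (V (Sum.inr t'))) = wv i t' * Q₁ s t' := by
      intro t'; simp [dotProduct_smul, hQ₁def, smul_eq_mul]
    rw [Finset.sum_congr rfl fun t' _ => h6 t']
    have h7 : ∑ t', wv i t' * Q₁ s t' = (Q₁.mulVec (wv i)) s := by
      simp [Matrix.mulVec, dotProduct, mul_comm]
    rw [h7, hQ₁w]
  have hQu : ∀ i, Q.mulVec (u i) = M.mulVec (b i) := by
    intro i
    have hdiff : ∀ a, V a ⬝ᵥ (Q.mulVec (u i) - M.mulVec (b i)) = 0 := by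
      intro a
      rw [dotProduct_sub]
      cases a with
      | inl t =>
        rw [hVQuL]
        have h5 : V (Sum.inl t) ⬝ᵥ M.mulVec (b i) = 0 := by
          rw [hVinl]; exact hMK _ _ (b t).2 (b i).2
        rw [h5, sub_zero]
      | inr s =>
        rw [hVQuR]
        have h8 : V (Sum.inr s) ⬝ᵥ M.mulVec (b i) = colC i s := by
          rw [hcolC, hC'def, ← hVinl]
          rfl
        rw [h8, sub_self]
    exact sub_eq_zero.mp (hzero _ hdiff)
  have hQ₁isymm : (Q₁⁻¹).IsSymm := by
    show (Q₁⁻¹)ᵀ = Q₁⁻¹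
    rw [Matrix.transpose_nonsing_inv, hQ₁symm.eq]
  have hGram : (Matrix.of fun i j : Fin k =>
        Bdual (M.mulVec (b i : Fin d → ℂ)) (M.mulVec (b j : Fin d → ℂ)))
      = B' * Q₁⁻¹ * C' := by
    ext i j
    rw [Matrix.of_apply, ← hQu, ← hQu, hBdual]
    -- LHS = u i ⬝ᵥ Q *ᵥ u j
    have hL : u i ⬝ᵥ Q.mulVec (u j) = wv i ⬝ᵥ colC j := by
      have : u i ⬝ᵥ Q.mulVec (u j) = ∑ s, wv i s * (V (Sum.inr s) ⬝ᵥ Q.mulVec (u j)) := by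
        show (∑ s, wv i s • V (Sum.inr s)) ⬝ᵥ Q.mulVec (u j) = _
        rw [sum_dotProduct']
        refine Finset.sum_congr rfl fun s _ => ?_
        rw [smul_dotProduct]
        rfl
      rw [this]
      simp only [hVQuR]
      rfl
    have hR : (B' * Q₁⁻¹ * C') i j = colC i ⬝ᵥ Q₁⁻¹.mulVec (colC j) := by
      simp only [Matrix.mul_apply, dotProduct, Matrix.mulVec, dotProduct, Finset.sum_mul,
        Finset.mul_sum]
      rw [Finset.sum_comm]
      refine Finset.sum_congr rfl fun t _ => Finset.sum_congr rfl fun s _ => ?_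
      rw [hBC]
      simp [hcolC]
      ring
    rw [hL, hR]
    -- wv i ⬝ᵥ colC j = colC i ⬝ᵥ Q₁⁻¹ *ᵥ colC j
    rw [hwv]
    show Q₁⁻¹.mulVec (colC i) ⬝ᵥ colC j = _
    rw [dotProduct_comm]
    exact symmdot _ hQ₁isymm _ _
  -- final assembly
  have hkey := key_coeff k m B' C' Q₁ D'
  have hc2 := congrArg (fun p : ℂ[X] => p.coeff (2*k)) hdetstep
  rw [hkey] at hc2
  rw [← map_pow, Polynomial.coeff_C_mul] at hc2
  rw [hschur] at hc2
  rw [hGram]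
  set DD := (B' * Q₁⁻¹ * C').det with hDD
  field_simp
  linear_combination hc2
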